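/- If c(1-b) = (2^c - 1)(1-ac) and a > (π/(2c²))(2^{-c} - 1) + 1/c, then z = 0 is a critical point of the standardized McN density with s'(0) < 0, i.e., z = 0 is a local maximum (mode) of the density. -/

import Mathlib

open Real MeasureTheory

noncomputable def betaFn (a b : ℝ) : ℝ := ∫ t in (0:ℝ)..1, t ^ (a-1) * (1-t) ^ (b-1)

noncomputable def gaussPdf (x : ℝ) : ℝ := (Real.sqrt (2 * Real.pi))⁻¹ * Real.exp (-x^2/2)

noncomputable def stdNormCdf (x : ℝ) : ℝ := ∫ t in Set.Iic x, gaussPdf t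

noncomputable def sFun (a b c z : ℝ) : ℝ :=
  (a*c - 1) * gaussPdf z * (1 - stdNormCdf z ^ c)
    - c * (b - 1) * gaussPdf z * stdNormCdf z ^ c
    - z * stdNormCdf z * (1 - stdNormCdf z ^ c)

lemma gaussPdf_pos (x : ℝ) : 0 < gaussPdf x := by unfold gaussPdf; positivity
lemma gaussPdf_cont : Continuous gaussPdf := by unfold gaussPdf; fun_prop

lemma gaussPdf_integrable : Integrable gaussPdf := by
  have h := (integrable_exp_neg_mul_sq (by norm_num : (0:ℝ) < 1/2)).const_mul (Real.sqrt (2 * Real.pi))⁻¹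
  apply h.congr
  filter_upwards with x
  unfold gaussPdf
  ring_nf

lemma gaussPdf_even (x : ℝ) : gaussPdf (-x) = gaussPdf x := by unfold gaussPdf; ring_nf

lemma integral_gaussPdf : ∫ x, gaussPdf x = 1 := by
  unfold gaussPdf
  rw [MeasureTheory.integral_const_mul]
  have : ∀ a : ℝ, rexp (-a^2/2) = rexp (-(1/2) * a^2) := fun a => by ring_nf
  simp_rw [this, integral_gaussian]
  rw [show π / (1/2) = 2 * π by ring, inv_mul_cancel₀ (by positivity)]

lemma stdNormCdf_zero : stdNormCdf 0 = 1/2 := by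
  have h1 : ∫ x in Set.Iic (0:ℝ), gaussPdf x = ∫ x in Set.Ioi (0:ℝ), gaussPdf x := by
    rw [show Set.Ioi (0:ℝ) = Set.Ioi (-0) by norm_num, ← integral_comp_neg_Iic]
    simp only [gaussPdf_even, neg_zero]
  have h2 : stdNormCdf 0 + ∫ x in Set.Ioi (0:ℝ), gaussPdf x = 1 := by
    rw [← integral_gaussPdf, stdNormCdf]
    rw [← MeasureTheory.setIntegral_union (Set.Iic_disjoint_Ioi le_rfl) measurableSet_Ioi
      gaussPdf_integrable.integrableOn gaussPdf_integrable.integrableOn, Set.Iic_union_Ioi,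
      MeasureTheory.setIntegral_univ]
  rw [stdNormCdf] at *
  linarith [h1, h2]

lemma stdNormCdf_eq (x : ℝ) : stdNormCdf x = stdNormCdf 0 + ∫ t in (0:ℝ)..x, gaussPdf t := by
  have := intervalIntegral.integral_Iic_sub_Iic (f := gaussPdf) (μ := volume) (a := 0) (b := x)
    gaussPdf_integrable.integrableOn gaussPdf_integrable.integrableOn
  unfold stdNormCdf
  linarith [this]

lemma stdNormCdf_hasDeriv (x : ℝ) : HasDerivAt stdNormCdf (gaussPdf x) x := by
  have h : HasDerivAt (fun y => stdNormCdf 0 + ∫ t in (0:ℝ)..y, gaussPdf t) (gaussPdf x) x := by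
    apply HasDerivAt.const_add
    exact intervalIntegral.integral_hasDerivAt_right
      gaussPdf_integrable.intervalIntegrable
      (gaussPdf_cont.stronglyMeasurableAtFilter _ _) gaussPdf_cont.continuousAt
  exact h.congr_of_eventuallyEq (Filter.Eventually.of_forall fun y => stdNormCdf_eq y)

lemma stdNormCdf_cont : Continuous stdNormCdf :=
  continuous_iff_continuousAt.2 fun x => (stdNormCdf_hasDeriv x).continuousAt

lemma gaussPdf_hasDeriv (x : ℝ) : HasDerivAt gaussPdf (-x * gaussPdf x) x := by
  unfold gaussPdf
  have h : HasDerivAt (fun y : ℝ => -y^2/2) (-x) x := by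
    have := ((hasDerivAt_pow 2 x).neg).div_const 2
    exact this.congr_deriv (by ring)
  have := (h.exp).const_mul (Real.sqrt (2 * Real.pi))⁻¹
  exact this.congr_deriv (by ring)

lemma sFun_hasDeriv (a b c z : ℝ) (hz : stdNormCdf z ≠ 0) :
    HasDerivAt (sFun a b c)
      (((a*c-1) * (-z * gaussPdf z) * (1 - stdNormCdf z ^ c)
          + (a*c-1) * gaussPdf z * -(gaussPdf z * c * stdNormCdf z ^ (c-1)))
        - ((c*(b-1)) * (-z * gaussPdf z) * stdNormCdf z ^ c
          + (c*(b-1)) * gaussPdf z * (gaussPdf z * c * stdNormCdf z ^ (c-1)))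
        - ((1 * stdNormCdf z + z * gaussPdf z) * (1 - stdNormCdf z ^ c)
          + z * stdNormCdf z * -(gaussPdf z * c * stdNormCdf z ^ (c-1)))) z := by
  have hφ := gaussPdf_hasDeriv z
  have hΦ := stdNormCdf_hasDeriv z
  have hP : HasDerivAt (fun y => stdNormCdf y ^ c)
      (gaussPdf z * c * stdNormCdf z ^ (c-1)) z := hΦ.rpow_const (Or.inl hz)
  have h1 := (hφ.const_mul (a*c-1)).mul ((hasDerivAt_const z (1:ℝ)).sub hP)
  have h2 := (hφ.const_mul (c*(b-1))).mul hP
  have h3 := ((hasDerivAt_id z).mul hΦ).mul ((hasDerivAt_const z (1:ℝ)).sub hP)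
  have h4 := (h1.sub h2).sub h3
  simp only [id_eq, zero_sub] at h4
  exact h4

lemma betaIntegrand_contOn (a b : ℝ) {s : Set ℝ} (hs : ∀ x ∈ s, x ≠ 0 ∧ (1:ℝ) - x ≠ 0) :
    ContinuousOn (fun t : ℝ => t ^ (a-1) * (1-t) ^ (b-1)) s := by
  apply ContinuousOn.mul
  · exact continuousOn_id.rpow_const (fun x hx => Or.inl (hs x hx).1)
  · exact (continuousOn_const.sub continuousOn_id).rpow_const (fun x hx => Or.inl (hs x hx).2)

lemma betaFn_integrable {a b : ℝ} (ha : 0 < a) (hb : 0 < b) :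
    IntervalIntegrable (fun t : ℝ => t ^ (a-1) * (1-t) ^ (b-1)) volume 0 1 := by
  have left : IntervalIntegrable (fun t : ℝ => t ^ (a-1) * (1-t) ^ (b-1)) volume 0 (1/2) := by
    set M : ℝ := max 1 ((1/2:ℝ) ^ (b-1)) with hM
    have hg : IntervalIntegrable (fun t : ℝ => t ^ (a-1) * M) volume 0 (1/2) :=
      (intervalIntegral.intervalIntegrable_rpow' (by linarith)).mul_const M
    have huIoc : Set.uIoc (0:ℝ) (1/2) = Set.Ioc 0 (1/2) := Set.uIoc_of_le (by norm_num)
    have hmeas : AEStronglyMeasurable (fun t : ℝ => t ^ (a-1) * (1-t) ^ (b-1))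
        (volume.restrict (Set.uIoc (0:ℝ) (1/2))) := by
      rw [huIoc]
      exact (betaIntegrand_contOn a b (fun x hx =>
        ⟨ne_of_gt hx.1, ne_of_gt (by linarith [hx.2] : (0:ℝ) < 1 - x)⟩)).aestronglyMeasurable
        measurableSet_Ioc
    refine hg.mono_fun' hmeas ?_
    filter_upwards [ae_restrict_mem measurableSet_uIoc] with t ht
    rw [huIoc] at ht
    obtain ⟨ht0, ht1⟩ := ht
    have h1t : (0:ℝ) < 1 - t := by linarith
    have hbd : (1-t) ^ (b-1) ≤ M := by
      rcases le_or_gt 1 b with h | h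
      · exact le_max_of_le_left (Real.rpow_le_one h1t.le (by linarith) (by linarith))
      · exact le_max_of_le_right (Real.rpow_le_rpow_of_nonpos (by norm_num) (by linarith)
          (by linarith))
    have : |t ^ (a-1) * (1-t) ^ (b-1)| = t ^ (a-1) * (1-t) ^ (b-1) := by
      rw [abs_of_nonneg]; positivity
    simp only [norm_eq_abs, this]
    exact mul_le_mul_of_nonneg_left hbd (by positivity)
  have right : IntervalIntegrable (fun t : ℝ => t ^ (a-1) * (1-t) ^ (b-1)) volume (1/2) 1 := by
    set M : ℝ := max 1 ((1/2:ℝ) ^ (a-1)) with hM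
    have hg0 : IntervalIntegrable (fun t : ℝ => t ^ (b-1)) volume 0 (1/2) :=
      intervalIntegral.intervalIntegrable_rpow' (by linarith)
    have hg1 := (hg0.comp_sub_left 1).const_mul M
    norm_num at hg1
    have huIoc : Set.uIoc (1/2:ℝ) 1 = Set.Ioc (1/2) 1 := Set.uIoc_of_le (by norm_num)
    have hmeas : AEStronglyMeasurable (fun t : ℝ => t ^ (a-1) * (1-t) ^ (b-1))
        (volume.restrict (Set.uIoc (1/2:ℝ) 1)) := by
      rw [huIoc, ← Measure.restrict_congr_set Ioo_ae_eq_Ioc]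
      exact (betaIntegrand_contOn a b (s := Set.Ioo (1/2:ℝ) 1) (fun x hx =>
        ⟨ne_of_gt (by linarith [hx.1] : (0:ℝ) < x),
         ne_of_gt (by linarith [hx.2] : (0:ℝ) < 1 - x)⟩)).aestronglyMeasurable
        measurableSet_Ioo
    refine (hg1.symm.mono_fun' hmeas ?_)
    filter_upwards [ae_restrict_mem measurableSet_uIoc] with t ht
    rw [huIoc] at ht
    obtain ⟨ht0, ht1⟩ := ht
    have h1t : (0:ℝ) ≤ 1 - t := by linarith
    have htpos : (0:ℝ) < t := by linarith
    have hbd : t ^ (a-1) ≤ M := by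
      rcases le_or_gt 1 a with h | h
      · exact le_max_of_le_left (Real.rpow_le_one htpos.le (by linarith) (by linarith))
      · exact le_max_of_le_right (Real.rpow_le_rpow_of_nonpos (by norm_num) (by linarith)
          (by linarith))
    have : |t ^ (a-1) * (1-t) ^ (b-1)| = t ^ (a-1) * (1-t) ^ (b-1) := by
      rw [abs_of_nonneg]; positivity
    simp only [norm_eq_abs, this]
    calc t ^ (a-1) * (1-t) ^ (b-1) ≤ M * (1-t) ^ (b-1) :=
          mul_le_mul_of_nonneg_right hbd (by positivity)
      _ = M * (1-t) ^ (b-1) := rfl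
  exact left.trans right

lemma betaFn_pos {a b : ℝ} (ha : 0 < a) (hb : 0 < b) : 0 < betaFn a b := by
  refine intervalIntegral.intervalIntegral_pos_of_pos_on (betaFn_integrable ha hb) ?_ one_pos
  intro x hx
  have h1 : 0 < x := hx.1
  have h2 : 0 < 1 - x := by linarith [hx.2]
  positivity

lemma F_hasDeriv (a b c : ℝ) {z : ℝ} (hΦ0 : 0 < stdNormCdf z) (hP1 : stdNormCdf z ^ c < 1) :
    HasDerivAt (fun z => (c / betaFn a b) * gaussPdf z * stdNormCdf z ^ (a*c - 1)
        * (1 - stdNormCdf z ^ c) ^ (b - 1))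
      ((c / betaFn a b) * gaussPdf z * stdNormCdf z ^ (a*c-2)
        * (1 - stdNormCdf z ^ c) ^ (b-2) * sFun a b c z) z := by
  have hφ := gaussPdf_hasDeriv z
  have hΦ := stdNormCdf_hasDeriv z
  have hne : stdNormCdf z ≠ 0 := hΦ0.ne'
  have hBpos : (0:ℝ) < 1 - stdNormCdf z ^ c := by linarith
  have hC := hφ.const_mul (c / betaFn a b)
  have hA : HasDerivAt (fun y => stdNormCdf y ^ (a*c-1))
      (gaussPdf z * (a*c-1) * stdNormCdf z ^ (a*c-1-1)) z := hΦ.rpow_const (Or.inl hne)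
  have hP : HasDerivAt (fun y => stdNormCdf y ^ c)
      (gaussPdf z * c * stdNormCdf z ^ (c-1)) z := hΦ.rpow_const (Or.inl hne)
  have hB : HasDerivAt (fun y => (1 - stdNormCdf y ^ c) ^ (b-1))
      ((0 - gaussPdf z * c * stdNormCdf z ^ (c-1)) * (b-1) * (1 - stdNormCdf z ^ c) ^ (b-1-1)) z :=
    ((hasDerivAt_const z (1:ℝ)).sub hP).rpow_const (Or.inl hBpos.ne')
  have htot := (hC.mul hA).mul hB
  have e1 : stdNormCdf z ^ (a*c-1) = stdNormCdf z ^ (a*c-2) * stdNormCdf z := by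
    have h := (Real.rpow_add hΦ0 (a*c-2) 1).symm
    rw [Real.rpow_one] at h
    rw [show a*c-1 = a*c-2+1 by ring, ← h]
  have e2 : (1 - stdNormCdf z ^ c) ^ (b-1)
      = (1 - stdNormCdf z ^ c) ^ (b-2) * (1 - stdNormCdf z ^ c) := by
    have h := (Real.rpow_add hBpos (b-2) 1).symm
    rw [Real.rpow_one] at h
    rw [show b-1 = b-2+1 by ring, ← h]
  have e4 : stdNormCdf z ^ (c-1) * stdNormCdf z = stdNormCdf z ^ c := by
    have h := (Real.rpow_add hΦ0 (c-1) 1).symm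
    rw [Real.rpow_one] at h
    have hc1 : c - 1 + 1 = c := by ring
    rw [hc1] at h
    exact h
  refine htot.congr_deriv ?_
  symm
  simp only [Pi.mul_apply]
  rw [show a*c-1-1 = a*c-2 by ring, show b-1-1 = b-2 by ring, e1, e2]
  simp only [sFun]
  linear_combination ((c / betaFn a b) * gaussPdf z * gaussPdf z * c * (b-1)
    * stdNormCdf z ^ (a*c-2) * (1 - stdNormCdf z ^ c) ^ (b-2)) * e4

/-- sufficient conditions for z = 0 to be a mode of the McN density. -/
theorem mcN_zero_is_mode (a b c : ℝ) (ha : 0 < a) (hb : 0 < b) (hc : 0 < c)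
    (h1 : c * (1 - b) = ((2:ℝ) ^ c - 1) * (1 - a*c))
    (h2 : a > Real.pi / (2 * c^2) * ((2:ℝ) ^ (-c) - 1) + 1/c) :
    sFun a b c 0 = 0 ∧ deriv (sFun a b c) 0 < 0
      ∧ IsLocalMax (fun z => (c / betaFn a b) * gaussPdf z * stdNormCdf z ^ (a*c - 1)
          * (1 - stdNormCdf z ^ c) ^ (b - 1)) 0 := by
  set q : ℝ := (2:ℝ) ^ (-c) with hqdef
  set p : ℝ := (2:ℝ) ^ c with hpdef
  have hqp : q * p = 1 := by
    rw [hqdef, hpdef, ← Real.rpow_add two_pos]; simp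
  have hq0 : 0 < q := Real.rpow_pos_of_pos two_pos _
  have hq1 : q < 1 := by
    rw [hqdef]
    exact Real.rpow_lt_one_of_one_lt_of_neg one_lt_two (by linarith)
  have hhalfc : ((1:ℝ)/2) ^ c = q := by
    rw [hqdef, Real.rpow_neg (by norm_num : (0:ℝ) ≤ 2)]
    rw [show (1:ℝ)/2 = 2⁻¹ by norm_num, Real.inv_rpow (by norm_num : (0:ℝ) ≤ 2)]
  have hr : ((1:ℝ)/2) ^ (c-1) = 2 * q := by
    rw [Real.rpow_sub (by norm_num : (0:ℝ) < 1/2), hhalfc, Real.rpow_one]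
    ring
  have hπ : 0 < π := Real.pi_pos
  have hG : gaussPdf 0 * gaussPdf 0 * (2 * π) = 1 := by
    unfold gaussPdf
    rw [show (-(0:ℝ)^2/2) = 0 by norm_num, Real.exp_zero]
    have h2π : (0:ℝ) < 2 * π := by positivity
    rw [mul_one, ← mul_inv, Real.mul_self_sqrt h2π.le]
    exact inv_mul_cancel₀ h2π.ne'
  set G := gaussPdf 0 with hGdef
  have hGpos : 0 < G := gaussPdf_pos 0
  have part1 : sFun a b c 0 = 0 := by
    show (a*c - 1) * gaussPdf 0 * (1 - stdNormCdf 0 ^ c)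
      - c * (b - 1) * gaussPdf 0 * stdNormCdf 0 ^ c
      - 0 * stdNormCdf 0 * (1 - stdNormCdf 0 ^ c) = 0
    rw [stdNormCdf_zero, hhalfc, ← hGdef]
    linear_combination G * q * h1 + G * (1 - a*c) * hqp
  have hD0 := sFun_hasDeriv a b c 0 (by rw [stdNormCdf_zero]; norm_num)
  have part2 : deriv (sFun a b c) 0 < 0 := by
    rw [hD0.deriv]
    rw [stdNormCdf_zero, hhalfc, hr, ← hGdef]
    have h2' : a * c^2 > π * (q - 1) / 2 + c := by
      have h7 := mul_lt_mul_of_pos_right h2 (by positivity : (0:ℝ) < c^2)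
      calc π * (q - 1)/2 + c = (π / (2*c^2) * (q - 1) + 1/c) * c^2 := by
            field_simp
        _ < a * c^2 := by nlinarith [h2, sq_nonneg c]
    have hkey : c * (a*c - 1) > π * (q - 1) / 2 := by nlinarith
    have hb1 : c * (b - 1) = (p - 1) * (a*c - 1) := by linarith [h1]
    rw [hb1]
    have hexpr : (a * c - 1) * (-0 * G) * (1 - q) + (a * c - 1) * G * -(G * c * (2 * q)) -
        ((p - 1) * (a * c - 1) * (-0 * G) * q + (p - 1) * (a * c - 1) * G * (G * c * (2 * q))) -
      ((1 * (1 / 2) + 0 * G) * (1 - q) + 0 * (1 / 2) * -(G * c * (2 * q)))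
        = -(2*G*G*(c*(a*c-1))) - (1-q)/2 := by
      linear_combination (-2*G*G*c*(a*c-1))*hqp
    rw [hexpr]
    have h5 : (q-1)/2 < 2*G*G*(c*(a*c-1)) := by
      have h6 := mul_lt_mul_of_pos_left hkey (by positivity : (0:ℝ) < 2*G*G)
      have e : 2*G*G*(π*(q-1)/2) = (q-1)/2 := by linear_combination ((q-1)/2) * hG
      linarith
    linarith
  refine ⟨part1, part2, ?_⟩
  -- Part C : local max
  have hCpos : 0 < c / betaFn a b := div_pos hc (betaFn_pos ha hb)
  -- neighborhood where Phi is in (1/4, 3/4)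
  have hev1 : ∀ᶠ z in nhds (0:ℝ), stdNormCdf z ∈ Set.Ioo (1/4:ℝ) (3/4) := by
    apply (stdNormCdf_cont.continuousAt).eventually_mem
    rw [stdNormCdf_zero]
    exact Ioo_mem_nhds (by norm_num) (by norm_num)
  -- sign of s near 0
  have hslope : Filter.Tendsto (fun z => sFun a b c z / z) (nhdsWithin 0 {(0:ℝ)}ᶜ)
      (nhds (deriv (sFun a b c) 0)) := by
    have := hasDerivAt_iff_tendsto_slope.1 (hD0.deriv ▸ hD0)
    refine this.congr' ?_
    filter_upwards [self_mem_nhdsWithin] with z hz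
    rw [slope_def_field, part1]
    simp [div_eq_inv_mul]
  have hev2 : ∀ᶠ z in nhdsWithin 0 {(0:ℝ)}ᶜ, sFun a b c z / z < 0 := by
    have := hslope.eventually_lt_const part2
    exact this
  rw [eventually_nhdsWithin_iff] at hev2
  obtain ⟨ε, hε, hball⟩ := Metric.eventually_nhds_iff.1 (hev1.and hev2)
  set δ : ℝ := ε/2 with hδdef
  have hδ0 : 0 < δ := by positivity
  have hprop : ∀ z : ℝ, |z| ≤ δ →
      (stdNormCdf z ∈ Set.Ioo (1/4:ℝ) (3/4)) ∧ (z ≠ 0 → sFun a b c z / z < 0) := by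
    intro z hz
    have : dist z 0 < ε := by
      rw [Real.dist_eq, sub_zero]
      calc |z| ≤ δ := hz
        _ < ε := by rw [hδdef]; linarith
    exact hball this
  set F : ℝ → ℝ := fun z => (c / betaFn a b) * gaussPdf z * stdNormCdf z ^ (a*c - 1)
      * (1 - stdNormCdf z ^ c) ^ (b - 1) with hFdef
  have hFder : ∀ z : ℝ, |z| ≤ δ → HasDerivAt F
      ((c / betaFn a b) * gaussPdf z * stdNormCdf z ^ (a*c-2)
        * (1 - stdNormCdf z ^ c) ^ (b-2) * sFun a b c z) z := by
    intro z hz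
    have h := (hprop z hz).1
    have hΦ0 : 0 < stdNormCdf z := by linarith [h.1]
    have hΦ1 : stdNormCdf z < 1 := by linarith [h.2]
    exact F_hasDeriv a b c hΦ0 (Real.rpow_lt_one hΦ0.le hΦ1 hc)
  have hKpos : ∀ z : ℝ, |z| ≤ δ → 0 < (c / betaFn a b) * gaussPdf z * stdNormCdf z ^ (a*c-2)
      * (1 - stdNormCdf z ^ c) ^ (b-2) := by
    intro z hz
    have h := (hprop z hz).1
    have hΦ0 : 0 < stdNormCdf z := by linarith [h.1]
    have hΦ1 : stdNormCdf z < 1 := by linarith [h.2]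
    have hP1 : stdNormCdf z ^ c < 1 := Real.rpow_lt_one hΦ0.le hΦ1 hc
    have hB0 : (0:ℝ) < 1 - stdNormCdf z ^ c := by linarith
    exact mul_pos (mul_pos (mul_pos hCpos (gaussPdf_pos z))
      (Real.rpow_pos_of_pos hΦ0 _)) (Real.rpow_pos_of_pos hB0 _)
  have habs : ∀ z : ℝ, z ∈ Set.Icc (-δ) δ → |z| ≤ δ := by
    intro z hz
    rw [abs_le]; exact ⟨hz.1, hz.2⟩
  have hmono : MonotoneOn F (Set.Icc (-δ) 0) := by
    have hsub : Set.Icc (-δ) (0:ℝ) ⊆ Set.Icc (-δ) δ := Set.Icc_subset_Icc le_rfl hδ0.le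
    apply monotoneOn_of_deriv_nonneg (convex_Icc _ _)
    · exact fun x hx => (hFder x (habs x (hsub hx))).continuousAt.continuousWithinAt
    · rw [interior_Icc]
      exact fun x hx => (hFder x (habs x (hsub (Set.Ioo_subset_Icc_self hx)))).differentiableAt
        |>.differentiableWithinAt
    · rw [interior_Icc]
      intro x hx
      have hx' : |x| ≤ δ := habs x (hsub (Set.Ioo_subset_Icc_self hx))
      rw [(hFder x hx').deriv]
      have hxneg : x < 0 := hx.2
      have hsx : 0 < sFun a b c x := by
        have := (hprop x hx').2 (ne_of_lt hxneg)
        rcases div_neg_iff.1 this with ⟨h1', h2'⟩ | ⟨h1', h2'⟩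
        · exact h1'
        · linarith
      exact le_of_lt (mul_pos (hKpos x hx') hsx)
  have hanti : AntitoneOn F (Set.Icc 0 δ) := by
    have hsub : Set.Icc (0:ℝ) δ ⊆ Set.Icc (-δ) δ := Set.Icc_subset_Icc (by linarith) le_rfl
    apply antitoneOn_of_deriv_nonpos (convex_Icc _ _)
    · exact fun x hx => (hFder x (habs x (hsub hx))).continuousAt.continuousWithinAt
    · rw [interior_Icc]
      exact fun x hx => (hFder x (habs x (hsub (Set.Ioo_subset_Icc_self hx)))).differentiableAt
        |>.differentiableWithinAt
    · rw [interior_Icc]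
      intro x hx
      have hx' : |x| ≤ δ := habs x (hsub (Set.Ioo_subset_Icc_self hx))
      rw [(hFder x hx').deriv]
      have hxpos : 0 < x := hx.1
      have hsx : sFun a b c x < 0 := by
        have := (hprop x hx').2 (ne_of_gt hxpos)
        rcases div_neg_iff.1 this with ⟨h1', h2'⟩ | ⟨h1', h2'⟩
        · linarith
        · exact h1'
      exact le_of_lt (mul_neg_of_pos_of_neg (hKpos x hx') hsx)
  have h0mem1 : (0:ℝ) ∈ Set.Icc (-δ) 0 := ⟨by linarith, le_rfl⟩
  have h0mem2 : (0:ℝ) ∈ Set.Icc 0 δ := ⟨le_rfl, hδ0.le⟩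
  filter_upwards [Icc_mem_nhds (by linarith : -δ < (0:ℝ)) hδ0] with z hz
  rcases le_total z 0 with hle | hle
  · exact hmono ⟨hz.1, hle⟩ h0mem1 hle
  · exact hanti h0mem2 ⟨hle, hz.2⟩ hle
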